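/- arXiv:2306.06922 — 2 statements merged into one kernel-verified Lean document; each statement's English description precedes it below -/
import Mathlib

section
/- The subdifferential of a lower semicontinuous convex function φ : ℝⁿ → (-∞, +∞] with Int(Dom φ) ≠ ∅ is maximal monotone: if (x₁, y₁) ∈ ℝⁿ × ℝⁿ satisfies ⟨x₁ - x₂, y₁ - y₂⟩ ≥ 0 for all (x₂, y₂) with y₂ ∈ ∂φ(x₂), then y₁ ∈ ∂φ(x₁). -/
open Set Filter Topology

section Aux

/-- A lower semicontinuous `EReal`-valued function attains its minimum on a
nonempty compact set. -/
theorem lsc_min_on_compact' {α : Type*} [TopologicalSpace α] [T2Space α]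
    {f : α → EReal} (hf : LowerSemicontinuous f) {S : Set α}
    (hS : IsCompact S) (hne : S.Nonempty) :
    ∃ x₀ ∈ S, ∀ x ∈ S, f x₀ ≤ f x := by
  obtain ⟨u, hu_anti, hu_tend, hu_mem⟩ :=
    exists_seq_tendsto_sInf (hne.image f) (OrderBot.bddBelow _)
  choose g hgS hgf using fun k => (hu_mem k : u k ∈ f '' S)
  set t : ℕ → Set α := fun k => S ∩ f ⁻¹' Iic (u k) with ht
  have htcl : ∀ k, IsClosed (t k) := fun k =>
    hS.isClosed.inter (hf.isClosed_preimage (u k))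
  have htsub : ∀ k, t (k + 1) ⊆ t k := by
    intro k x hx
    exact ⟨hx.1, le_trans hx.2 (hu_anti (Nat.le_succ k))⟩
  have htne : ∀ k, (t k).Nonempty := fun k => ⟨g k, hgS k, le_of_eq (hgf k)⟩
  have h0 : IsCompact (t 0) := hS.of_isClosed_subset (htcl 0) (inter_subset_left)
  obtain ⟨x₀, hx₀⟩ :=
    IsCompact.nonempty_iInter_of_sequence_nonempty_isCompact_isClosed t htsub htne h0 htcl
  simp only [mem_iInter, mem_inter_iff, mem_preimage, mem_Iic, t] at hx₀
  refine ⟨x₀, (hx₀ 0).1, fun x hx => ?_⟩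
  have hle : f x₀ ≤ sInf (f '' S) :=
    ge_of_tendsto hu_tend (Eventually.of_forall fun k => (hx₀ k).2)
  exact hle.trans (sInf_le ⟨x, hx, rfl⟩)

theorem ereal_add_coe_le_coe_iff' (a : EReal) (c M : ℝ) :
    a + (c : EReal) ≤ (M : EReal) ↔ a ≤ ((M - c : ℝ) : EReal) := by
  induction a using EReal.rec with
  | bot => simp
  | coe r =>
    rw [← EReal.coe_add, EReal.coe_le_coe_iff, EReal.coe_le_coe_iff]
    constructor <;> intro <;> linarith
  | top =>
    simp only [EReal.top_add_coe, top_le_iff]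
    constructor
    · exact fun h => absurd h (EReal.coe_ne_top M)
    · exact fun h => absurd h (EReal.coe_ne_top (M - c))

/-- A proper lsc convex function on Euclidean space has a continuous affine minorant. -/
theorem affine_minorant' {n : ℕ} (φ : EuclideanSpace ℝ (Fin n) → EReal)
    (hconv : ∀ x y : EuclideanSpace ℝ (Fin n), ∀ t : ℝ, 0 ≤ t → t ≤ 1 →
      φ (t • x + (1 - t) • y) ≤ (t : EReal) * φ x + ((1 - t : ℝ) : EReal) * φ y)
    (hlsc : LowerSemicontinuous φ)
    (hbot : ∀ x, φ x ≠ ⊥) (u : EuclideanSpace ℝ (Fin n)) (hu : φ u < ⊤) :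
    ∃ (g : EuclideanSpace ℝ (Fin n) →L[ℝ] ℝ) (b : ℝ),
      ∀ x, ((g x + b : ℝ) : EReal) ≤ φ x := by
  have hconv_epi : Convex ℝ {p : EuclideanSpace ℝ (Fin n) × ℝ | φ p.1 ≤ (p.2 : EReal)} := by
    rintro p hp q hq a b ha hb hab
    have hb' : b = 1 - a := by linarith
    simp only [mem_setOf_eq, Prod.fst_add, Prod.smul_fst, Prod.snd_add,
      Prod.smul_snd, smul_eq_mul] at *
    subst hb'
    calc φ (a • p.1 + (1 - a) • q.1) ≤ (a : EReal) * φ p.1 + ((1 - a : ℝ) : EReal) * φ q.1 :=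
          hconv _ _ a ha (by linarith)
      _ ≤ (a : EReal) * (p.2 : EReal) + ((1 - a : ℝ) : EReal) * (q.2 : EReal) :=
          add_le_add (mul_le_mul_of_nonneg_left hp (EReal.coe_nonneg.mpr ha))
            (mul_le_mul_of_nonneg_left hq (EReal.coe_nonneg.mpr hb))
      _ = ((a * p.2 + (1 - a) * q.2 : ℝ) : EReal) := by
          rw [EReal.coe_add, EReal.coe_mul, EReal.coe_mul]
  have hlsc_fst : LowerSemicontinuous (fun p : EuclideanSpace ℝ (Fin n) × ℝ => φ p.1) :=
    fun p y hy => (continuous_fst.tendsto p).eventually (hlsc p.1 y hy)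
  have hclosed : IsClosed {p : EuclideanSpace ℝ (Fin n) × ℝ | φ p.1 ≤ (p.2 : EReal)} := by
    rw [← isOpen_compl_iff, isOpen_iff_mem_nhds]
    rintro p hp
    simp only [mem_compl_iff, mem_setOf_eq, not_le] at hp
    obtain ⟨c, hc1, hc2⟩ := exists_between hp
    have h1 : ∀ᶠ q : EuclideanSpace ℝ (Fin n) × ℝ in 𝓝 p, c < φ q.1 := hlsc_fst p c hc2
    have h2 : ∀ᶠ q : EuclideanSpace ℝ (Fin n) × ℝ in 𝓝 p, (q.2 : EReal) < c :=
      (isOpen_lt (continuous_coe_real_ereal.comp continuous_snd) continuous_const).mem_nhds hc1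
    filter_upwards [h1, h2] with q hq1 hq2
    exact not_le.mpr (hq2.trans hq1)
  obtain ⟨r, hr⟩ : ∃ r : ℝ, φ u = (r : EReal) :=
    ⟨(φ u).toReal, (EReal.coe_toReal hu.ne (hbot u)).symm⟩
  have hpt : (u, r - 1) ∉ {p : EuclideanSpace ℝ (Fin n) × ℝ | φ p.1 ≤ (p.2 : EReal)} := by
    simp only [mem_setOf_eq, hr, not_le, EReal.coe_lt_coe_iff]
    linarith
  obtain ⟨f, c, hfc, hsep⟩ := geometric_hahn_banach_point_closed hconv_epi hclosed hpt
  set β : ℝ := f (0, 1) with hβ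
  have hsplit : ∀ (x : EuclideanSpace ℝ (Fin n)) (t : ℝ), f (x, t) = f (x, 0) + t * β := by
    intro x t
    have : (x, t) = (x, (0 : ℝ)) + t • ((0 : EuclideanSpace ℝ (Fin n)), (1 : ℝ)) := by
      simp [Prod.ext_iff]
    rw [this, map_add, map_smul, smul_eq_mul]
  have hur : (u, r) ∈ {p : EuclideanSpace ℝ (Fin n) × ℝ | φ p.1 ≤ (p.2 : EReal)} := by
    simp [mem_setOf_eq, hr]
  have hβpos : 0 < β := by
    have h1 := hsep _ hur
    rw [hsplit] at h1 hfc
    nlinarith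
  refine ⟨(β⁻¹ • (-f)).comp (ContinuousLinearMap.inl ℝ (EuclideanSpace ℝ (Fin n)) ℝ),
    c / β, fun x => ?_⟩
  rcases eq_or_ne (φ x) ⊤ with htop | htop
  · rw [htop]; exact le_top
  · obtain ⟨s, hs⟩ : ∃ s : ℝ, φ x = (s : EReal) :=
      ⟨(φ x).toReal, (EReal.coe_toReal htop (hbot x)).symm⟩
    have hmem : (x, s) ∈ {p : EuclideanSpace ℝ (Fin n) × ℝ | φ p.1 ≤ (p.2 : EReal)} := by
      simp [mem_setOf_eq, hs]
    have h1 := hsep _ hmem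
    rw [hsplit] at h1
    rw [hs, EReal.coe_le_coe_iff]
    simp only [ContinuousLinearMap.comp_apply, ContinuousLinearMap.inl_apply,
      ContinuousLinearMap.smul_apply, ContinuousLinearMap.neg_apply, smul_eq_mul]
    have hgoal : (c - f (x, 0)) / β ≤ s := by
      rw [div_le_iff₀ hβpos]; nlinarith
    calc β⁻¹ * -f (x, 0) + c / β = (c - f (x, 0)) / β := by ring
      _ ≤ s := hgoal

end Aux

/-- The subdifferential of a lower semicontinuous convex function `φ : ℝⁿ → (-∞, +∞]`
with `Int(Dom φ) ≠ ∅` is maximal monotone: if `(x₁, y₁)` satisfies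
`⟨x₁ - x₂, y₁ - y₂⟩ ≥ 0` for all `(x₂, y₂)` with `y₂ ∈ ∂φ(x₂)`, then `y₁ ∈ ∂φ(x₁)`. -/
theorem subdifferential_maximal_monotone (n : ℕ) (φ : EuclideanSpace ℝ (Fin n) → EReal)
    (hconv : ∀ x y : EuclideanSpace ℝ (Fin n), ∀ t : ℝ, 0 ≤ t → t ≤ 1 →
      φ (t • x + (1 - t) • y) ≤ (t : EReal) * φ x + ((1 - t : ℝ) : EReal) * φ y)
    (hlsc : LowerSemicontinuous φ)
    (hdom : (interior {x | φ x < ⊤}).Nonempty)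
    (x₁ y₁ : EuclideanSpace ℝ (Fin n))
    (hmax : ∀ x₂ y₂ : EuclideanSpace ℝ (Fin n),
      (∀ z, ((inner ℝ y₂ (z - x₂) : ℝ) : EReal) + φ x₂ ≤ φ z) →
      0 ≤ (inner ℝ (x₁ - x₂) (y₁ - y₂) : ℝ)) :
    ∀ z, ((inner ℝ y₁ (z - x₁) : ℝ) : EReal) + φ x₁ ≤ φ z := by
  by_cases hbotex : ∃ p, φ p = ⊥
  · -- degenerate case: φ takes the value ⊥ somewhere
    obtain ⟨p, hp⟩ := hbotex
    have hsub : ∀ y₂ : EuclideanSpace ℝ (Fin n),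
        ∀ z, ((inner ℝ y₂ (z - p) : ℝ) : EReal) + φ p ≤ φ z := by
      intro y₂ z; rw [hp, EReal.add_bot]; exact bot_le
    have h := hmax p (y₁ + (x₁ - p)) (hsub _)
    have hxp : x₁ - p = 0 := by
      have heq : y₁ - (y₁ + (x₁ - p)) = -(x₁ - p) := by abel
      rw [heq, inner_neg_right] at h
      exact real_inner_self_nonpos.mp (by linarith)
    have hx : x₁ = p := by rwa [sub_eq_zero] at hxp
    intro z; rw [hx, hp, EReal.add_bot]; exact bot_le
  · push_neg at hbotex
    obtain ⟨u, huint⟩ := hdom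
    have hu : φ u < ⊤ := by
      have h := interior_subset huint
      simpa using h
    obtain ⟨ru, hru⟩ : ∃ r : ℝ, φ u = (r : EReal) :=
      ⟨(φ u).toReal, (EReal.coe_toReal hu.ne (hbotex u)).symm⟩
    obtain ⟨g, b, hg⟩ := affine_minorant' φ hconv hlsc hbotex u hu
    -- the quadratic perturbation
    set q : EuclideanSpace ℝ (Fin n) → ℝ :=
      fun x => (inner ℝ (x - x₁) (x - x₁) : ℝ) / 2 - (inner ℝ y₁ (x - x₁) : ℝ) with hqdef
    have hq_cont : Continuous q := by
      apply Continuous.sub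
      · exact ((continuous_id.sub continuous_const).inner
          (continuous_id.sub continuous_const)).div_const 2
      · exact continuous_const.inner (continuous_id.sub continuous_const)
    set ψ : EuclideanSpace ℝ (Fin n) → EReal := fun x => φ x + ((q x : ℝ) : EReal) with hψdef
    have hψ_lsc : LowerSemicontinuous ψ := by
      apply hlsc.add' ((continuous_coe_real_ereal.comp hq_cont).lowerSemicontinuous)
      intro x
      apply EReal.continuousAt_add
      · right; exact EReal.coe_ne_bot _
      · left; exact hbotex x
    set M : ℝ := ru + q u with hM
    set S : Set (EuclideanSpace ℝ (Fin n)) :=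
      {x | φ x ≤ ((M - q x : ℝ) : EReal)} with hSdef
    have hmemS : ∀ x, x ∈ S ↔ ψ x ≤ (M : EReal) := fun x =>
      (ereal_add_coe_le_coe_iff' (φ x) (q x) M).symm
    have hψu : ψ u = (M : EReal) := by
      simp only [ψ, hru, ← EReal.coe_add, hM]
    have huS : u ∈ S := (hmemS u).mpr (le_of_eq hψu)
    have hSclosed : IsClosed S := by
      rw [← isOpen_compl_iff, isOpen_iff_mem_nhds]
      intro x hx
      simp only [hSdef, mem_compl_iff, mem_setOf_eq, not_le] at hx
      obtain ⟨c, hc1, hc2⟩ := exists_between hx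
      have h1 : ∀ᶠ y in 𝓝 x, c < φ y := hlsc x c hc2
      have h2 : ∀ᶠ y in 𝓝 x, ((M - q y : ℝ) : EReal) < c := by
        have hcont : Continuous fun y => ((M - q y : ℝ) : EReal) :=
          continuous_coe_real_ereal.comp (continuous_const.sub hq_cont)
        exact (isOpen_lt hcont continuous_const).mem_nhds hc1
      filter_upwards [h1, h2] with y hy1 hy2
      simp only [mem_compl_iff, mem_setOf_eq, not_le, S]
      exact hy2.trans hy1
    -- S is bounded
    set K : ℝ := ‖y₁‖ + ‖g‖ with hK
    set C : ℝ := |M - b| + ‖g‖ * ‖x₁‖ with hC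
    have hSbound : S ⊆ Metric.closedBall x₁ (2 * K + 2 * C + 1) := by
      intro x hx
      simp only [hSdef, mem_setOf_eq] at hx
      have hlow := (hg x).trans hx
      rw [EReal.coe_le_coe_iff] at hlow
      -- g x + b ≤ M - q x
      set d : ℝ := ‖x - x₁‖ with hd
      have hd0 : (0:ℝ) ≤ d := norm_nonneg _
      have hqx : (1/2) * d^2 - ‖y₁‖ * d ≤ q x := by
        have h1 : (inner ℝ (x - x₁) (x - x₁) : ℝ) = d^2 := real_inner_self_eq_norm_sq _
        have h2 : |(inner ℝ y₁ (x - x₁) : ℝ)| ≤ ‖y₁‖ * d := abs_real_inner_le_norm _ _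
        have h4 : (inner ℝ y₁ (x - x₁) : ℝ) ≤ ‖y₁‖ * d := (le_abs_self _).trans h2
        simp only [hqdef]
        rw [h1]
        linarith
      have hgx : -(‖g‖ * (d + ‖x₁‖)) ≤ g x := by
        have h1 : |g x| ≤ ‖g‖ * ‖x‖ := by
          have := g.le_opNorm x; rwa [Real.norm_eq_abs] at this
        have h2 : ‖x‖ ≤ d + ‖x₁‖ := by
          calc ‖x‖ = ‖x - x₁ + x₁‖ := by rw [sub_add_cancel]
            _ ≤ ‖x - x₁‖ + ‖x₁‖ := norm_add_le _ _
        have h3 := neg_abs_le (g x)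
        have h4 : ‖g‖ * ‖x‖ ≤ ‖g‖ * (d + ‖x₁‖) := mul_le_mul_of_nonneg_left h2 (norm_nonneg g)
        linarith
      have hkey : (1/2) * d^2 ≤ C + K * d := by
        have hMb : M - b ≤ |M - b| := le_abs_self _
        rw [hC, hK]
        clear_value d q M K C S ψ
        nlinarith [norm_nonneg g, norm_nonneg y₁]
      have : d ≤ 2 * K + 2 * C + 1 := by
        have hC0 : (0:ℝ) ≤ C := by positivity
        have hK0 : (0:ℝ) ≤ K := by positivity
        nlinarith [sq_nonneg (d - 2*K - 2*C - 1), sq_nonneg d]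
      simpa [Metric.mem_closedBall, dist_eq_norm] using this
    have hScompact : IsCompact S :=
      (isCompact_closedBall x₁ _).of_isClosed_subset hSclosed hSbound
    obtain ⟨x₀, hx₀S, hx₀min⟩ := lsc_min_on_compact' hψ_lsc hScompact ⟨u, huS⟩
    -- x₀ is a global minimizer of ψ
    have hψmin : ∀ x, ψ x₀ ≤ ψ x := by
      intro x
      by_cases hxS : x ∈ S
      · exact hx₀min x hxS
      · have h1 : ψ x₀ ≤ (M : EReal) := (hx₀min u huS).trans (le_of_eq hψu)
        have h2 : (M : EReal) < ψ x := lt_of_not_ge (fun h => hxS ((hmemS x).mpr h))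
        exact h1.trans h2.le
    -- φ x₀ is real
    have hφx₀ : ∃ r : ℝ, φ x₀ = (r : EReal) := by
      refine ⟨(φ x₀).toReal, (EReal.coe_toReal ?_ (hbotex x₀)).symm⟩
      intro htop
      have h1 : ψ x₀ ≤ (M : EReal) := (hx₀min u huS).trans (le_of_eq hψu)
      rw [hψdef] at h1
      simp only [htop, EReal.top_add_coe] at h1
      exact EReal.coe_ne_top M (top_le_iff.mp h1)
    obtain ⟨r₀, hr₀⟩ := hφx₀
    -- the subgradient at x₀
    set w : EuclideanSpace ℝ (Fin n) := y₁ - (x₀ - x₁) with hw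
    have hwsub : ∀ z, ((inner ℝ w (z - x₀) : ℝ) : EReal) + φ x₀ ≤ φ z := by
      intro z
      rcases eq_or_ne (φ z) ⊤ with htop | htop
      · rw [htop]; exact le_top
      obtain ⟨rz, hrz⟩ : ∃ r : ℝ, φ z = (r : EReal) :=
        ⟨(φ z).toReal, (EReal.coe_toReal htop (hbotex z)).symm⟩
      rw [hr₀, hrz, ← EReal.coe_add, EReal.coe_le_coe_iff]
      -- real goal: ⟪w, z - x₀⟫ + r₀ ≤ rz
      set d : EuclideanSpace ℝ (Fin n) := z - x₀ with hdd
      -- key inequality for each t ∈ (0, 1]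
      have hkey : ∀ t : ℝ, 0 < t → t ≤ 1 →
          (inner ℝ w d : ℝ) + r₀ ≤ rz + (t / 2) * (inner ℝ d d : ℝ) := by
        intro t ht0 ht1
        have hzt := hconv z x₀ t ht0.le ht1
        rw [hrz, hr₀, ← EReal.coe_mul, ← EReal.coe_mul, ← EReal.coe_add] at hzt
        have hmin := hψmin (t • z + (1 - t) • x₀)
        rw [hψdef] at hmin
        simp only at hmin
        have hmin2 : r₀ + q x₀ ≤ t * rz + (1 - t) * r₀ + q (t • z + (1 - t) • x₀) := by
          rw [← EReal.coe_le_coe_iff]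
          calc ((r₀ + q x₀ : ℝ) : EReal) = φ x₀ + ((q x₀ : ℝ) : EReal) := by
                rw [EReal.coe_add, hr₀]
            _ ≤ φ (t • z + (1 - t) • x₀) + ((q (t • z + (1 - t) • x₀) : ℝ) : EReal) := hmin
            _ ≤ ((t * rz + (1 - t) * r₀ : ℝ) : EReal) + ((q (t • z + (1 - t) • x₀) : ℝ) : EReal) :=
                add_le_add_left hzt _
            _ = ((t * rz + (1 - t) * r₀ + q (t • z + (1 - t) • x₀) : ℝ) : EReal) :=
                (EReal.coe_add _ _).symm
        -- expand q (t • z + (1 - t) • x₀)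
        have hvec : t • z + (1 - t) • x₀ - x₁ = (x₀ - x₁) + t • d := by
          simp only [hdd]; module
        have hqzt : q (t • z + (1 - t) • x₀) = q x₀ + t * (inner ℝ (x₀ - x₁) d : ℝ)
            + (t^2 / 2) * (inner ℝ d d : ℝ) - t * (inner ℝ y₁ d : ℝ) := by
          simp only [hqdef, hvec]
          rw [real_inner_add_add_self]
          rw [inner_add_right, real_inner_smul_right, real_inner_smul_right,
            real_inner_smul_left, real_inner_smul_right]
          ring
        rw [hqzt] at hmin2
        -- ⟪w, d⟫ = ⟪y₁, d⟫ - ⟪x₀ - x₁, d⟫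
        have hwd : (inner ℝ w d : ℝ) = (inner ℝ y₁ d : ℝ) - (inner ℝ (x₀ - x₁) d : ℝ) := by
          rw [hw, inner_sub_left]
        rw [hwd]
        nlinarith
      -- let t → 0
      have hdd0 : (0:ℝ) ≤ (inner ℝ d d : ℝ) := real_inner_self_nonneg
      apply le_of_forall_pos_le_add
      intro ε hε
      set t : ℝ := min 1 (2 * ε / ((inner ℝ d d : ℝ) + 1)) with htdef
      have ht0 : 0 < t := lt_min one_pos (by positivity)
      have ht1 : t ≤ 1 := min_le_left _ _
      have h := hkey t ht0 ht1
      have htd : (t / 2) * (inner ℝ d d : ℝ) ≤ ε := by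
        have h1 : t ≤ 2 * ε / ((inner ℝ d d : ℝ) + 1) := min_le_right _ _
        have h2 : (0:ℝ) < (inner ℝ d d : ℝ) + 1 := by linarith
        rw [le_div_iff₀ h2] at h1
        nlinarith
      linarith
    -- apply maximality
    have h := hmax x₀ w hwsub
    have hy₁w : y₁ - w = x₀ - x₁ := by rw [hw]; abel
    rw [hy₁w] at h
    have hx₀x₁ : x₁ - x₀ = -(x₀ - x₁) := by abel
    rw [hx₀x₁, inner_neg_left] at h
    have hzero : x₀ - x₁ = 0 := real_inner_self_nonpos.mp (by linarith)
    have hx : x₀ = x₁ := by rwa [sub_eq_zero] at hzero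
    intro z
    have := hwsub z
    rw [hx] at this
    rw [show w = y₁ by rw [hw, hx]; abel] at this
    exact this
end

section
/- If A : ℝⁿ → 2^{ℝⁿ} is a maximal monotone operator, then the closure of its domain D(A) = {x : A(x) ≠ ∅} is a convex subset of ℝⁿ. -/
open Set RealInnerProductSpace

namespace MaxMonAux

variable {E : Type*} [NormedAddCommGroup E] [InnerProductSpace ℝ E] [FiniteDimensional ℝ E]

/-- Finite one-point Kirszbraun lemma. -/
lemma finite_onepoint (z : E) (F : Finset (E × E))
    (hF : ∀ p ∈ F, ∀ q ∈ F, ‖p.2 - q.2‖ ≤ ‖p.1 - q.1‖) :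
    ∃ w : E, ∀ p ∈ F, ‖w - p.2‖ ≤ ‖z - p.1‖ := by
  classical
  rcases F.eq_empty_or_nonempty with rfl | hne
  · exact ⟨0, by simp⟩
  obtain ⟨p₀, hp₀⟩ := hne
  have hne : F.Nonempty := ⟨p₀, hp₀⟩
  set f : E × E → E → ℝ := fun p w => ‖w - p.2‖ ^ 2 - ‖z - p.1‖ ^ 2 with hf
  set g : E → ℝ := fun w => F.sup' hne (fun p => f p w) with hg
  have hfc : ∀ p : E × E, Continuous (f p) := by
    intro p
    exact ((continuous_id.sub continuous_const).norm.pow 2).sub continuous_const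
  have hgc : Continuous g := by
    rw [continuous_iff_continuousAt]
    intro w
    exact Filter.Tendsto.finset_sup'_nhds_apply hne (fun p _ => ((hfc p).tendsto w))
  -- existence of a global minimizer
  set R : ℝ := ‖p₀.2‖ + Real.sqrt (|g 0| + ‖z - p₀.1‖ ^ 2 + 1) with hR
  have hRnn : 0 ≤ R := by positivity
  have hout : ∀ v : E, v ∉ Metric.closedBall (0 : E) R → g 0 < g v := by
    intro v hv
    rw [Metric.mem_closedBall, dist_zero_right, not_le] at hv
    have h1 : f p₀ v ≤ g v := Finset.le_sup' (fun p => f p v) hp₀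
    have h2 : ‖v‖ - ‖p₀.2‖ ≤ ‖v - p₀.2‖ := norm_sub_norm_le _ _
    have h3 : Real.sqrt (|g 0| + ‖z - p₀.1‖ ^ 2 + 1) < ‖v - p₀.2‖ := by linarith
    have h4 : Real.sqrt (|g 0| + ‖z - p₀.1‖ ^ 2 + 1) ^ 2 < ‖v - p₀.2‖ ^ 2 := by
      have := Real.sqrt_nonneg (|g 0| + ‖z - p₀.1‖ ^ 2 + 1)
      nlinarith
    rw [Real.sq_sqrt (by positivity)] at h4
    have h5 : g 0 ≤ |g 0| := le_abs_self _
    simp only [hf] at h1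
    linarith
  obtain ⟨w, hwmem, hwmin⟩ := (isCompact_closedBall (0 : E) R).exists_isMinOn
    ⟨0, Metric.mem_closedBall_self hRnn⟩ hgc.continuousOn
  have hmin : ∀ v, g w ≤ g v := by
    intro v
    by_cases hv : v ∈ Metric.closedBall (0 : E) R
    · exact isMinOn_iff.mp hwmin v hv
    · exact (isMinOn_iff.mp hwmin 0 (Metric.mem_closedBall_self hRnn)).trans (hout v hv).le
  by_cases hc : g w ≤ 0
  · refine ⟨w, fun p hp => ?_⟩
    have h1 : f p w ≤ g w := Finset.le_sup' (fun p => f p w) hp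
    simp only [hf] at h1
    exact (pow_le_pow_iff_left₀ (norm_nonneg _) (norm_nonneg _) two_ne_zero).mp (by linarith)
  exfalso
  push_neg at hc
  set c : ℝ := g w with hcdef
  set I : Finset (E × E) := F.filter (fun p => f p w = c) with hI
  have hIne : I.Nonempty := by
    obtain ⟨p, hp, hpc⟩ := F.exists_mem_eq_sup' hne (fun p => f p w)
    exact ⟨p, Finset.mem_filter.mpr ⟨hp, hpc.symm⟩⟩
  have hIF : ∀ p ∈ I, p ∈ F := fun p hp => (Finset.mem_filter.mp hp).1
  set J : Finset E := I.image Prod.snd with hJ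
  have hJne : J.Nonempty := hIne.image _
  have hchoice : ∀ q ∈ J, ∃ p, p ∈ I ∧ p.2 = q := by
    intro q hq
    obtain ⟨p, hp, hpq⟩ := Finset.mem_image.mp hq
    exact ⟨p, hp, hpq⟩
  choose! P hPI hPq using hchoice
  have hact : ∀ q ∈ J, ‖w - q‖ ^ 2 = c + ‖z - (P q).1‖ ^ 2 := by
    intro q hq
    have h1 : f (P q) w = c := (Finset.mem_filter.mp (hPI q hq)).2
    simp only [hf] at h1
    rw [hPq q hq] at h1
    linarith
  -- the minimizer is in the convex hull of the active points
  have hwK : w ∈ convexHull ℝ (J : Set E) := by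
    by_contra hnot
    obtain ⟨φ, u, hφw, hφ⟩ := geometric_hahn_banach_point_closed
      (convex_convexHull ℝ (J : Set E))
      (((J : Set E).toFinite.isCompact_convexHull (𝕜 := ℝ)).isClosed) hnot
    set v : E := (InnerProductSpace.toDual ℝ E).symm φ with hv
    have hvi : ∀ x : E, ⟪v, x⟫ = φ x := fun x => InnerProductSpace.toDual_symm_apply
    set δ : ℝ := u - φ w with hδ
    have hδpos : 0 < δ := sub_pos.mpr hφw
    have hsep : ∀ q ∈ J, ⟪w - q, v⟫ ≤ -δ := by
      intro q hq
      have h2 : u < φ q := hφ q (subset_convexHull ℝ (J : Set E) (by exact_mod_cast hq))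
      have h3 : ⟪w - q, v⟫ = φ w - φ q := by
        rw [real_inner_comm, hvi, map_sub]
      rw [h3, hδ] at *
      linarith
    have hvne : v ≠ 0 := by
      obtain ⟨q, hq⟩ := hJne
      intro h0
      have := hsep q hq
      rw [h0, inner_zero_right] at this
      linarith
    have hv2 : 0 < ‖v‖ ^ 2 := pow_pos (norm_pos_iff.mpr hvne) 2
    set bound : E × E → ℝ := fun p =>
      if p ∈ I then δ / ‖v‖ ^ 2
      else (c - f p w) / (2 * |⟪w - p.2, v⟫| + ‖v‖ ^ 2 + 1) with hbound
    set s : ℝ := min 1 (F.inf' hne bound) with hs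
    have hspos : 0 < s := by
      refine lt_min one_pos ?_
      rw [Finset.lt_inf'_iff]
      intro p hp
      by_cases hpI : p ∈ I
      · simp only [hbound, if_pos hpI]
        exact div_pos hδpos hv2
      · simp only [hbound, if_neg hpI]
        apply div_pos
        · have hle : f p w ≤ c := Finset.le_sup' (fun p => f p w) hp
          have hne2 : f p w ≠ c := fun h => hpI (Finset.mem_filter.mpr ⟨hp, h⟩)
          have := lt_of_le_of_ne hle hne2
          linarith
        · positivity
    have hsle : ∀ p ∈ F, s ≤ bound p := fun p hp =>
      (min_le_right _ _).trans (Finset.inf'_le _ hp)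
    have hs1 : s ≤ 1 := min_le_left _ _
    have hcontra : g (w + s • v) < c := by
      rw [hg, Finset.sup'_lt_iff]
      intro p hp
      have hexp : f p (w + s • v) = f p w + 2 * s * ⟪w - p.2, v⟫ + s ^ 2 * ‖v‖ ^ 2 := by
        simp only [hf]
        rw [add_sub_right_comm, norm_add_sq_real, real_inner_smul_right, norm_smul,
          Real.norm_eq_abs, mul_pow, sq_abs]
        ring
      by_cases hpI : p ∈ I
      · have h1 : f p w = c := (Finset.mem_filter.mp hpI).2
        have h2 : ⟪w - p.2, v⟫ ≤ -δ := hsep p.2 (Finset.mem_image_of_mem _ hpI)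
        have h3 : s ≤ δ / ‖v‖ ^ 2 := by
          have h := hsle p hp
          simpa only [hbound, if_pos hpI] using h
        have h4 : s * ‖v‖ ^ 2 ≤ δ := by rwa [← le_div_iff₀ hv2]
        rw [hexp, h1]
        nlinarith
      · have h1 : f p w < c :=
          lt_of_le_of_ne (Finset.le_sup' (fun p => f p w) hp)
            (fun h => hpI (Finset.mem_filter.mpr ⟨hp, h⟩))
        have h3 : s ≤ (c - f p w) / (2 * |⟪w - p.2, v⟫| + ‖v‖ ^ 2 + 1) := by
          have h := hsle p hp
          simpa only [hbound, if_neg hpI] using h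
        have h4 : s * (2 * |⟪w - p.2, v⟫| + ‖v‖ ^ 2 + 1) ≤ c - f p w := by
          rwa [← le_div_iff₀ (by positivity)]
        have h5 : ⟪w - p.2, v⟫ ≤ |⟪w - p.2, v⟫| := le_abs_self _
        rw [hexp]
        nlinarith [mul_le_mul_of_nonneg_left h5 hspos.le,
          mul_le_mul_of_nonneg_left hs1 hspos.le, h4, hspos,
          sq_nonneg ‖v‖, abs_nonneg ⟪w - p.2, v⟫,
          mul_le_mul_of_nonneg_right (mul_le_mul_of_nonneg_left hs1 hspos.le) (sq_nonneg ‖v‖)]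
    exact absurd (hmin (w + s • v)) (not_le.mpr hcontra)
  -- convex combination representation and the Kirszbraun double-sum computation
  obtain ⟨μ, hμ0, hμ1, hμw⟩ := (Finset.mem_convexHull).mp hwK
  rw [Finset.centerMass_eq_of_sum_1 _ _ hμ1] at hμw
  simp only [id] at hμw
  have hzero : (∑ q ∈ J, μ q • (w - q)) = 0 := by
    simp only [smul_sub]
    rw [Finset.sum_sub_distrib, ← Finset.sum_smul, hμ1, one_smul, hμw, sub_self]
  have hpair : ∀ q ∈ J, ∀ q' ∈ J,
      c + ⟪z - (P q).1, z - (P q').1⟫ ≤ ⟪w - q, w - q'⟫ := by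
    intro q hq q' hq'
    have h2 : ‖q' - q‖ ≤ ‖(P q').1 - (P q).1‖ := by
      have := hF (P q') (hIF _ (hPI q' hq')) (P q) (hIF _ (hPI q hq))
      rwa [hPq q' hq', hPq q hq] at this
    have h2' : ‖q' - q‖ ^ 2 ≤ ‖(P q').1 - (P q).1‖ ^ 2 := by
      nlinarith [norm_nonneg (q' - q), norm_nonneg ((P q').1 - (P q).1)]
    have e1 : ‖q' - q‖ ^ 2 = ‖w - q‖ ^ 2 - 2 * ⟪w - q, w - q'⟫ + ‖w - q'‖ ^ 2 := by
      have h : q' - q = (w - q) - (w - q') := by abel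
      rw [h, norm_sub_sq_real]
    have e2 : ‖(P q').1 - (P q).1‖ ^ 2
        = ‖z - (P q).1‖ ^ 2 - 2 * ⟪z - (P q).1, z - (P q').1⟫ + ‖z - (P q').1‖ ^ 2 := by
      have h : (P q').1 - (P q).1 = (z - (P q).1) - (z - (P q').1) := by abel
      rw [h, norm_sub_sq_real]
    have e3 := hact q hq
    have e4 := hact q' hq'
    linarith
  have hdouble : (0 : ℝ) = ∑ q ∈ J, ∑ q' ∈ J, μ q * μ q' * ⟪w - q, w - q'⟫ := by
    have : (0 : ℝ) = ⟪∑ q ∈ J, μ q • (w - q), ∑ q' ∈ J, μ q' • (w - q')⟫ := by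
      rw [hzero, inner_zero_left]
    rw [this, sum_inner]
    refine Finset.sum_congr rfl fun q hq => ?_
    rw [real_inner_smul_left, inner_sum, Finset.mul_sum]
    refine Finset.sum_congr rfl fun q' hq' => ?_
    rw [real_inner_smul_right]
    ring
  have hlow : ∑ q ∈ J, ∑ q' ∈ J, μ q * μ q' * (c + ⟪z - (P q).1, z - (P q').1⟫)
      ≤ ∑ q ∈ J, ∑ q' ∈ J, μ q * μ q' * ⟪w - q, w - q'⟫ := by
    refine Finset.sum_le_sum fun q hq => Finset.sum_le_sum fun q' hq' => ?_
    exact mul_le_mul_of_nonneg_left (hpair q hq q' hq')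
      (mul_nonneg (hμ0 q hq) (hμ0 q' hq'))
  have hsplit : ∑ q ∈ J, ∑ q' ∈ J, μ q * μ q' * (c + ⟪z - (P q).1, z - (P q').1⟫)
      = c + ‖∑ q ∈ J, μ q • (z - (P q).1)‖ ^ 2 := by
    have hinner : ⟪∑ q ∈ J, μ q • (z - (P q).1), ∑ q' ∈ J, μ q' • (z - (P q').1)⟫
        = ∑ q ∈ J, ∑ q' ∈ J, μ q * μ q' * ⟪z - (P q).1, z - (P q').1⟫ := by
      rw [sum_inner]
      refine Finset.sum_congr rfl fun q hq => ?_
      rw [real_inner_smul_left, inner_sum, Finset.mul_sum]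
      refine Finset.sum_congr rfl fun q' hq' => ?_
      rw [real_inner_smul_right]
      ring
    have hconst : ∑ q ∈ J, ∑ q' ∈ J, μ q * μ q' * c = c := by
      have : ∀ q ∈ J, ∑ q' ∈ J, μ q * μ q' * c = μ q * c := by
        intro q _
        rw [← Finset.sum_mul, ← Finset.mul_sum, hμ1]
        ring
      rw [Finset.sum_congr rfl this, ← Finset.sum_mul, hμ1, one_mul]
    calc ∑ q ∈ J, ∑ q' ∈ J, μ q * μ q' * (c + ⟪z - (P q).1, z - (P q').1⟫)
        = (∑ q ∈ J, ∑ q' ∈ J, μ q * μ q' * c)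
          + ∑ q ∈ J, ∑ q' ∈ J, μ q * μ q' * ⟪z - (P q).1, z - (P q').1⟫ := by
          rw [← Finset.sum_add_distrib]
          refine Finset.sum_congr rfl fun q hq => ?_
          rw [← Finset.sum_add_distrib]
          refine Finset.sum_congr rfl fun q' hq' => ?_
          ring
      _ = c + ‖∑ q ∈ J, μ q • (z - (P q).1)‖ ^ 2 := by
          rw [hconst, ← real_inner_self_eq_norm_sq, hinner]
  nlinarith [sq_nonneg ‖∑ q ∈ J, μ q • (z - (P q).1)‖, hdouble, hlow, hsplit, hc]

/-- One-point Kirszbraun lemma for an arbitrary "graph" set of pairs. -/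
lemma onepoint (P : Set (E × E)) (hP : ∀ p ∈ P, ∀ q ∈ P, ‖p.2 - q.2‖ ≤ ‖p.1 - q.1‖) (z : E) :
    ∃ w : E, ∀ p ∈ P, ‖w - p.2‖ ≤ ‖z - p.1‖ := by
  classical
  rcases P.eq_empty_or_nonempty with rfl | ⟨p₀, hp₀⟩
  · exact ⟨0, by simp⟩
  have hfip : ∀ u : Finset ↥P,
      (Metric.closedBall p₀.2 ‖z - p₀.1‖ ∩
        ⋂ p ∈ u, Metric.closedBall (p : E × E).2 ‖z - (p : E × E).1‖).Nonempty := by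
    intro u
    set F : Finset (E × E) := insert p₀ (u.image Subtype.val) with hFdef
    have hmem : ∀ p ∈ F, p ∈ P := by
      intro p hp
      rcases Finset.mem_insert.mp hp with rfl | hp2
      · exact hp₀
      · obtain ⟨q, _, rfl⟩ := Finset.mem_image.mp hp2
        exact q.2
    obtain ⟨w, hw⟩ := finite_onepoint z F (fun p hp q hq => hP p (hmem p hp) q (hmem q hq))
    refine ⟨w, ?_, ?_⟩
    · rw [Metric.mem_closedBall, dist_eq_norm]
      exact hw p₀ (Finset.mem_insert_self _ _)
    · simp only [Set.mem_iInter]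
      intro p hpu
      rw [Metric.mem_closedBall, dist_eq_norm]
      exact hw p (Finset.mem_insert_of_mem (Finset.mem_image_of_mem _ hpu))
  obtain ⟨w, -, hw⟩ := (isCompact_closedBall p₀.2 ‖z - p₀.1‖).inter_iInter_nonempty
    (fun p : ↥P => Metric.closedBall (p : E × E).2 ‖z - (p : E × E).1‖)
    (fun p => Metric.isClosed_closedBall) hfip
  rw [Set.mem_iInter] at hw
  refine ⟨w, fun p hp => ?_⟩
  have := hw ⟨p, hp⟩
  rwa [Metric.mem_closedBall, dist_eq_norm] at this

/-- Minty-type solvability of the resolvent equation. -/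
lemma mintyResolvent (A : E → Set E)
    (hmono : ∀ x₁ y₁ x₂ y₂ : E, y₁ ∈ A x₁ → y₂ ∈ A x₂ → 0 ≤ ⟪x₁ - x₂, y₁ - y₂⟫)
    (hmax : ∀ x₁ y₁ : E, (∀ x₂ y₂ : E, y₂ ∈ A x₂ → 0 ≤ ⟪x₁ - x₂, y₁ - y₂⟫) → y₁ ∈ A x₁)
    (lam : ℝ) (hlam : 0 < lam) (z : E) :
    ∃ x y : E, y ∈ A x ∧ x + lam • y = z := by
  classical
  set P : Set (E × E) := {p | ∃ a b, b ∈ A a ∧ p = (a + lam • b, a - lam • b)} with hPdef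
  have key : ∀ a₁ b₁ a₂ b₂ : E,
      ‖a₁ + lam • b₁ - (a₂ + lam • b₂)‖ ^ 2 - ‖a₁ - lam • b₁ - (a₂ - lam • b₂)‖ ^ 2
        = 4 * lam * ⟪a₁ - a₂, b₁ - b₂⟫ := by
    intro a₁ b₁ a₂ b₂
    have e1 : a₁ + lam • b₁ - (a₂ + lam • b₂) = (a₁ - a₂) + lam • (b₁ - b₂) := by
      rw [smul_sub]; abel
    have e2 : a₁ - lam • b₁ - (a₂ - lam • b₂) = (a₁ - a₂) - lam • (b₁ - b₂) := by
      rw [smul_sub]; abel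
    have n1 := norm_add_sq_real (a₁ - a₂) (lam • (b₁ - b₂))
    have n2 := norm_sub_sq_real (a₁ - a₂) (lam • (b₁ - b₂))
    rw [real_inner_smul_right] at n1 n2
    rw [e1, e2, n1, n2]
    ring
  have hP : ∀ p ∈ P, ∀ q ∈ P, ‖p.2 - q.2‖ ≤ ‖p.1 - q.1‖ := by
    rintro p ⟨a₁, b₁, hb₁, rfl⟩ q ⟨a₂, b₂, hb₂, rfl⟩
    simp only
    have h1 := key a₁ b₁ a₂ b₂
    have h2 : 0 ≤ ⟪a₁ - a₂, b₁ - b₂⟫ := hmono a₁ b₁ a₂ b₂ hb₁ hb₂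
    refine (pow_le_pow_iff_left₀ (norm_nonneg _) (norm_nonneg _) two_ne_zero).mp ?_
    nlinarith
  obtain ⟨w, hw⟩ := onepoint P hP z
  have hly : lam • ((1 / (2 * lam) : ℝ) • (z - w)) = (1 / 2 : ℝ) • (z - w) := by
    have hl0 : lam ≠ 0 := ne_of_gt hlam
    rw [smul_smul]
    congr 1
    field_simp
  refine ⟨(1 / 2 : ℝ) • (z + w), (1 / (2 * lam) : ℝ) • (z - w), ?_, ?_⟩
  · apply hmax
    intro a b hb
    have h1 : ‖w - (a - lam • b)‖ ≤ ‖z - (a + lam • b)‖ := hw _ ⟨a, b, hb, rfl⟩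
    set uu : E := z - (a + lam • b) with huu
    set vv : E := w - (a - lam • b) with hvv
    have e1 : (1 / 2 : ℝ) • (z + w) - a = (1 / 2 : ℝ) • (uu + vv) := by
      rw [huu, hvv]; module
    have e2 : lam • ((1 / (2 * lam) : ℝ) • (z - w) - b) = (1 / 2 : ℝ) • (uu - vv) := by
      rw [smul_sub, hly, huu, hvv]; module
    have e3 : lam * ⟪(1 / 2 : ℝ) • (z + w) - a, (1 / (2 * lam) : ℝ) • (z - w) - b⟫
        = (1 / 4 : ℝ) * (‖uu‖ ^ 2 - ‖vv‖ ^ 2) := by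
      rw [← real_inner_smul_right, e2, e1, real_inner_smul_left, real_inner_smul_right,
        inner_sub_right, inner_add_left, inner_add_left, real_inner_comm vv uu,
        real_inner_self_eq_norm_sq, real_inner_self_eq_norm_sq]
      ring
    have h2 : ‖vv‖ ^ 2 ≤ ‖uu‖ ^ 2 := by nlinarith [norm_nonneg vv, norm_nonneg uu]
    nlinarith
  · rw [hly]; module

set_option maxHeartbeats 1000000 in
/-- A convex combination of two domain points lies in the closure of the domain. -/
lemma seg (A : E → Set E)
    (hmono : ∀ x₁ y₁ x₂ y₂ : E, y₁ ∈ A x₁ → y₂ ∈ A x₂ → 0 ≤ ⟪x₁ - x₂, y₁ - y₂⟫)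
    (hmax : ∀ x₁ y₁ : E, (∀ x₂ y₂ : E, y₂ ∈ A x₂ → 0 ≤ ⟪x₁ - x₂, y₁ - y₂⟫) → y₁ ∈ A x₁)
    {a b : E} (ha : (A a).Nonempty) (hb : (A b).Nonempty)
    {s t : ℝ} (hs : 0 ≤ s) (ht : 0 ≤ t) (hst : s + t = 1) :
    s • a + t • b ∈ closure {x | (A x).Nonempty} := by
  obtain ⟨wa, hwa⟩ := ha
  obtain ⟨wb, hwb⟩ := hb
  rw [Metric.mem_closure_iff]
  intro ε hε
  set z : E := s • a + t • b with hz
  set W : ℝ := ‖wa‖ + ‖wb‖ + 1 with hW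
  have hW1 : 1 ≤ W := by
    have := norm_nonneg wa; have := norm_nonneg wb; rw [hW]; linarith
  set M : ℝ := ‖z - a‖ + ‖z - b‖ + 1 with hM
  have hM1 : 1 ≤ M := by
    have := norm_nonneg (z - a); have := norm_nonneg (z - b); rw [hM]; linarith
  set lam : ℝ := min (ε / (4 * W)) (ε ^ 2 / (4 * W * M)) with hlamdef
  have hlam : 0 < lam := lt_min (by positivity) (by positivity)
  obtain ⟨x, y, hy, hxy⟩ := mintyResolvent A hmono hmax lam hlam z
  refine ⟨x, ⟨y, hy⟩, ?_⟩
  set r : ℝ := ‖z - x‖ with hr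
  have hr0 : 0 ≤ r := norm_nonneg _
  have hyz : lam • y = z - x := by rw [← hxy]; abel
  have hia : ∀ w' : E, w' ∈ A a → ⟪a - x, y⟫ ≤ ‖a - x‖ * ‖w'‖ := by
    intro w' hw'
    have h1 := hmono x y a w' hy hw'
    have h2 : ⟪x - a, y - w'⟫ = ⟪x - a, y⟫ - ⟪x - a, w'⟫ := inner_sub_right _ _ _
    have h3 : ⟪a - x, y⟫ = -⟪x - a, y⟫ := by rw [← neg_sub x a, inner_neg_left]
    have h4 : ⟪a - x, w'⟫ = -⟪x - a, w'⟫ := by rw [← neg_sub x a, inner_neg_left]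
    have h5 : ⟪a - x, w'⟫ ≤ ‖a - x‖ * ‖w'‖ := real_inner_le_norm _ _
    linarith
  have hib : ∀ w' : E, w' ∈ A b → ⟪b - x, y⟫ ≤ ‖b - x‖ * ‖w'‖ := by
    intro w' hw'
    have h1 := hmono x y b w' hy hw'
    have h2 : ⟪x - b, y - w'⟫ = ⟪x - b, y⟫ - ⟪x - b, w'⟫ := inner_sub_right _ _ _
    have h3 : ⟪b - x, y⟫ = -⟪x - b, y⟫ := by rw [← neg_sub x b, inner_neg_left]
    have h4 : ⟪b - x, w'⟫ = -⟪x - b, w'⟫ := by rw [← neg_sub x b, inner_neg_left]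
    have h5 : ⟪b - x, w'⟫ ≤ ‖b - x‖ * ‖w'‖ := real_inner_le_norm _ _
    linarith
  have hax : ‖a - x‖ ≤ M + r := by
    have h1 := dist_triangle a z x
    rw [dist_eq_norm, dist_eq_norm, dist_eq_norm] at h1
    have h2 : ‖a - z‖ = ‖z - a‖ := norm_sub_rev _ _
    have := norm_nonneg (z - b)
    rw [hM]; rw [h2] at h1; linarith
  have hbx : ‖b - x‖ ≤ M + r := by
    have h1 := dist_triangle b z x
    rw [dist_eq_norm, dist_eq_norm, dist_eq_norm] at h1
    have h2 : ‖b - z‖ = ‖z - b‖ := norm_sub_rev _ _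
    have := norm_nonneg (z - a)
    rw [hM]; rw [h2] at h1; linarith
  have hMr : (0 : ℝ) ≤ M + r := by linarith
  have hia2 : ⟪a - x, y⟫ ≤ (M + r) * ‖wa‖ :=
    (hia wa hwa).trans (mul_le_mul_of_nonneg_right hax (norm_nonneg wa))
  have hib2 : ⟪b - x, y⟫ ≤ (M + r) * ‖wb‖ :=
    (hib wb hwb).trans (mul_le_mul_of_nonneg_right hbx (norm_nonneg wb))
  have hsplit : z - x = s • (a - x) + t • (b - x) := by
    have e : s • (a - x) + t • (b - x) = s • a + t • b - (s + t) • x := by module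
    rw [e, hst, one_smul, hz]
  have hzy : ⟪z - x, y⟫ ≤ (M + r) * W := by
    have e : ⟪z - x, y⟫ = s * ⟪a - x, y⟫ + t * ⟪b - x, y⟫ := by
      rw [hsplit, inner_add_left, real_inner_smul_left, real_inner_smul_left]
    rw [e]
    have h5 : s * ⟪a - x, y⟫ ≤ s * ((M + r) * ‖wa‖) := mul_le_mul_of_nonneg_left hia2 hs
    have h6 : t * ⟪b - x, y⟫ ≤ t * ((M + r) * ‖wb‖) := mul_le_mul_of_nonneg_left hib2 ht
    have hs1 : s ≤ 1 := by linarith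
    have ht1 : t ≤ 1 := by linarith
    have hwa0 := norm_nonneg wa
    have hwb0 := norm_nonneg wb
    have hWnn : 0 ≤ W := by linarith
    nlinarith [mul_nonneg hMr hwa0, mul_nonneg hMr hwb0, mul_nonneg hs hwa0,
      mul_nonneg ht hwb0, mul_le_mul_of_nonneg_right hs1 (mul_nonneg hMr hwa0),
      mul_le_mul_of_nonneg_right ht1 (mul_nonneg hMr hwb0)]
  have h0 : r ^ 2 = lam * ⟪z - x, y⟫ := by
    rw [hr, ← real_inner_self_eq_norm_sq, ← hyz, real_inner_smul_right]
  have key : r ^ 2 ≤ lam * ((M + r) * W) := by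
    rw [h0]
    exact mul_le_mul_of_nonneg_left hzy hlam.le
  rw [dist_eq_norm, ← hr]
  by_contra hcon
  push_neg at hcon
  have hl1 : lam * (4 * W) ≤ ε := by
    have := min_le_left (ε / (4 * W)) (ε ^ 2 / (4 * W * M))
    rw [← hlamdef] at this
    exact (le_div_iff₀ (by positivity)).mp this
  have hl2 : lam * (4 * W * M) ≤ ε ^ 2 := by
    have := min_le_right (ε / (4 * W)) (ε ^ 2 / (4 * W * M))
    rw [← hlamdef] at this
    exact (le_div_iff₀ (by positivity)).mp this
  nlinarith [key, mul_le_mul_of_nonneg_right hl1 hr0, hl2, hlam,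
    mul_le_mul_of_nonneg_left hcon hε.le, mul_le_mul_of_nonneg_right hcon hr0,
    mul_pos hε hε]

end MaxMonAux

open Set

/-- If `A : ℝⁿ → 2^{ℝⁿ}` is a maximal monotone operator, then the closure of its domain
`D(A) = {x : A(x) ≠ ∅}` is a convex subset of `ℝⁿ`. -/
theorem maximal_monotone_closure_domain_convex (n : ℕ)
    (A : EuclideanSpace ℝ (Fin n) → Set (EuclideanSpace ℝ (Fin n)))
    (hmono : ∀ x₁ y₁ x₂ y₂ : EuclideanSpace ℝ (Fin n), y₁ ∈ A x₁ → y₂ ∈ A x₂ →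
      0 ≤ (inner ℝ (x₁ - x₂) (y₁ - y₂) : ℝ))
    (hmax : ∀ x₁ y₁ : EuclideanSpace ℝ (Fin n),
      (∀ x₂ y₂ : EuclideanSpace ℝ (Fin n), y₂ ∈ A x₂ →
        0 ≤ (inner ℝ (x₁ - x₂) (y₁ - y₂) : ℝ)) → y₁ ∈ A x₁) :
    Convex ℝ (closure {x | (A x).Nonempty}) := by
  intro p hp q hq s t hs ht hst
  have hcont : Continuous
      (Function.uncurry fun a b : EuclideanSpace ℝ (Fin n) => s • a + t • b) := by
    fun_prop
  have hmem := map_mem_closure₂ hcont hp hq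
    (fun a ha b hb => MaxMonAux.seg A hmono hmax ha hb hs ht hst)
  rwa [closure_closure] at hmem
end
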